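/- Let a, b, z ∈ [−D, D]^d with δ = ‖a−b‖₂ > 0, and let x be the Euclidean distance of z from the line through a and b. Then |‖z−a‖₂ − ‖z−b‖₂| ≤ δ − x²δ/(32dD²). -/

import Mathlib

open MeasureTheory ProbabilityTheory RealInnerProductSpace


-- Half lemma: assuming B ≤ A
lemma half (A B s x δ M : ℝ) (hx : 0 ≤ x) (hδ : 0 < δ) (hM : 0 < M)
    (hA0 : 0 ≤ A) (hB0 : 0 ≤ B)
    (hA : A ^ 2 = x ^ 2 + s ^ 2) (hB : B ^ 2 = x ^ 2 + (s - δ) ^ 2)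
    (hAM : A ≤ M) (hBM : B ≤ M) (hBA : B ≤ A) :
    A - B ≤ δ - x ^ 2 * δ / (8 * M ^ 2) := by
  -- basic facts
  have hsA : s ≤ A := by nlinarith [sq_nonneg x]
  have hsA' : -A ≤ s := by nlinarith [sq_nonneg x]
  have h1 : s - δ ≤ B := by nlinarith [sq_nonneg x]
  have hxA : x ≤ A := by nlinarith [sq_nonneg s]
  -- A + B > 0
  have hABpos : 0 < A + B := by nlinarith [sq_nonneg (2*s - δ), mul_nonneg hA0 hB0]
  -- A - s ≥ x^2/(2M), cleared form
  have hAs : x ^ 2 ≤ (A - s) * (2 * M) := by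
    rcases le_or_gt (A + s) 0 with h | h
    · nlinarith
    · nlinarith [mul_le_mul_of_nonneg_left hAM (show (0:ℝ) ≤ A - s by linarith)]
  have hR : x ^ 2 ≤ (A + B - 2*s + δ) * (2 * M) := by nlinarith
  have hQ : A ≤ B + δ := by nlinarith [sq_nonneg (A - (B + δ))]
  have hQnn : (0:ℝ) ≤ δ - A + B := by linarith
  have h4 : (δ - A + B) * (A + B) = δ * (A + B - 2*s + δ) := by nlinarith
  rw [show δ - x ^ 2 * δ / (8 * M ^ 2) = (δ * (8 * M ^ 2) - x ^ 2 * δ) / (8 * M ^ 2) by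
    field_simp, le_div_iff₀ (by positivity)]
  nlinarith [mul_le_mul_of_nonneg_left hR hδ.le,
    mul_nonneg hQnn (show (0:ℝ) ≤ 2*M - (A+B) by linarith),
    mul_nonneg (mul_nonneg hQnn (show (0:ℝ) ≤ 2*M - (A+B) by linarith)) (show (0:ℝ) ≤ 2*M by linarith),
    mul_nonneg hQnn hM.le, mul_nonneg (mul_nonneg hQnn hM.le) hM.le]

lemma key (A B s x δ M : ℝ) (hx : 0 ≤ x) (hδ : 0 < δ) (hM : 0 < M)
    (hA0 : 0 ≤ A) (hB0 : 0 ≤ B)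
    (hA : A ^ 2 = x ^ 2 + s ^ 2) (hB : B ^ 2 = x ^ 2 + (s - δ) ^ 2)
    (hAM : A ≤ M) (hBM : B ≤ M) :
    |A - B| ≤ δ - x ^ 2 * δ / (8 * M ^ 2) := by
  rcases le_total B A with h | h
  · rw [abs_of_nonneg (by linarith)]
    exact half A B s x δ M hx hδ hM hA0 hB0 hA hB hAM hBM h
  · rw [abs_of_nonpos (by linarith)]
    have := half B A (δ - s) x δ M hx hδ hM hB0 hA0 (by nlinarith) (by nlinarith) hBM hAM h
    linarith

lemma norm_le_sqrt (d : ℕ) (D : ℝ) (hD : 0 ≤ D) (w : EuclideanSpace ℝ (Fin d))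
    (hw : ∀ i, |w i| ≤ D) : ‖w‖ ≤ Real.sqrt d * D := by
  rw [EuclideanSpace.norm_eq]
  have : ∑ i, ‖w i‖ ^ 2 ≤ (d : ℝ) * D ^ 2 := by
    calc ∑ i, ‖w i‖ ^ 2 ≤ ∑ _i : Fin d, D ^ 2 := by
          apply Finset.sum_le_sum
          intro i _
          have := hw i
          rw [Real.norm_eq_abs]
          nlinarith [abs_nonneg (w i)]
      _ = (d : ℝ) * D ^ 2 := by simp [Finset.sum_const]
  calc Real.sqrt (∑ i, ‖w i‖ ^ 2) ≤ Real.sqrt ((d:ℝ) * D ^ 2) := Real.sqrt_le_sqrt this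
    _ = Real.sqrt d * D := by
        rw [Real.sqrt_mul (Nat.cast_nonneg d), Real.sqrt_sq hD]


/-- The `d`-dimensional spherical Gaussian measure with mean `m` and standard deviation `σ`
(covariance `σ² · I`), as a measure on Euclidean space. -/
noncomputable def gaussPi (d : ℕ) (m : EuclideanSpace ℝ (Fin d)) (σ : ℝ) :
    Measure (EuclideanSpace ℝ (Fin d)) :=
  Measure.map (MeasurableEquiv.toLp 2 (Fin d → ℝ))
    (Measure.pi fun i => gaussianReal (m i) ((σ ^ 2).toNNReal))


/-- For points `a, b, z ∈ [-D,D]^d` with `δ = ‖a-b‖ > 0`, if `x` is the distance of `z` from the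
line through `a` and `b`, then `|‖z-a‖ - ‖z-b‖| ≤ δ - x²δ/(32dD²)`. -/
theorem stmt10 (d : ℕ) (hd : 1 ≤ d) (D : ℝ) (hD : 0 < D)
    (a b z : EuclideanSpace ℝ (Fin d))
    (ha : ∀ i, |a i| ≤ D) (hb : ∀ i, |b i| ≤ D) (hz : ∀ i, |z i| ≤ D)
    (hab : a ≠ b) :
    |‖z - a‖ - ‖z - b‖| ≤ ‖a - b‖ -
      (Metric.infDist z {p | ∃ ξ : ℝ, p = a + ξ • (b - a)}) ^ 2 * ‖a - b‖
        / (32 * d * D ^ 2) := by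
  set u : EuclideanSpace ℝ (Fin d) := b - a with hu
  set δ : ℝ := ‖a - b‖ with hδdef
  have hδ : 0 < δ := by
    rw [hδdef, norm_pos_iff, sub_ne_zero]; exact hab
  have hun : ‖u‖ = δ := by rw [hu, hδdef, norm_sub_rev]
  set t : ℝ := ⟪z - a, u⟫ / δ ^ 2 with ht
  set p : EuclideanSpace ℝ (Fin d) := a + t • u with hp
  set x : ℝ := ‖z - p‖ with hx
  have hx0 : 0 ≤ x := norm_nonneg _
  -- infDist ≤ x
  have hinf : Metric.infDist z {p | ∃ ξ : ℝ, p = a + ξ • (b - a)} ≤ x := by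
    have hmem : p ∈ {p | ∃ ξ : ℝ, p = a + ξ • (b - a)} := ⟨t, rfl⟩
    calc Metric.infDist z _ ≤ dist z p := Metric.infDist_le_dist_of_mem hmem
      _ = x := by rw [dist_eq_norm]
  have hinf0 : 0 ≤ Metric.infDist z {p | ∃ ξ : ℝ, p = a + ξ • (b - a)} :=
    Metric.infDist_nonneg
  -- orthogonality
  have horth : ⟪z - p, u⟫ = 0 := by
    have hzp : z - p = (z - a) - t • u := by rw [hp]; abel
    rw [hzp, inner_sub_left, real_inner_smul_left, real_inner_self_eq_norm_sq, hun, ht]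
    field_simp
    ring
  -- decompositions
  have hA : ‖z - a‖ ^ 2 = x ^ 2 + (t * δ) ^ 2 := by
    have hza : z - a = (z - p) + t • u := by rw [hp]; abel
    rw [hza, norm_add_sq_real, real_inner_smul_right, horth, norm_smul, hun]
    rw [Real.norm_eq_abs, mul_pow, sq_abs]
    ring
  have hB : ‖z - b‖ ^ 2 = x ^ 2 + (t * δ - δ) ^ 2 := by
    have hzb : z - b = (z - p) + (t - 1) • u := by
      rw [hp, hu]; module
    rw [hzb, norm_add_sq_real, real_inner_smul_right, horth, norm_smul, hun]
    rw [Real.norm_eq_abs, mul_pow, sq_abs]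
    ring
  -- norm bounds
  set M : ℝ := 2 * Real.sqrt d * D with hM
  have hsd : (1:ℝ) ≤ Real.sqrt d := by
    rw [show (1:ℝ) = Real.sqrt 1 by simp]
    exact Real.sqrt_le_sqrt (by exact_mod_cast hd)
  have hM0 : 0 < M := by rw [hM]; positivity
  have hbound : ∀ w : EuclideanSpace ℝ (Fin d), (∀ i, |w i| ≤ D) → ∀ c : EuclideanSpace ℝ (Fin d),
      (∀ i, |c i| ≤ D) → ‖w - c‖ ≤ M := by
    intro w hw c hc
    calc ‖w - c‖ ≤ ‖w‖ + ‖c‖ := norm_sub_le _ _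
      _ ≤ Real.sqrt d * D + Real.sqrt d * D := by
          gcongr <;> [exact norm_le_sqrt d D hD.le w hw; exact norm_le_sqrt d D hD.le c hc]
      _ = M := by rw [hM]; ring
  have hAM : ‖z - a‖ ≤ M := hbound z hz a ha
  have hBM : ‖z - b‖ ≤ M := hbound z hz b hb
  have hM2 : 8 * M ^ 2 = 32 * d * D ^ 2 := by
    rw [hM]
    have : Real.sqrt d ^ 2 = (d : ℝ) := Real.sq_sqrt (Nat.cast_nonneg d)
    nlinarith [this]
  have hkey := key ‖z - a‖ ‖z - b‖ (t * δ) x δ M hx0 hδ hM0 (norm_nonneg _) (norm_nonneg _)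
    hA hB hAM hBM
  rw [hM2] at hkey
  refine hkey.trans ?_
  gcongr
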